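/- Let A be a unital C*-algebra, δ > 0, R ≥ 0, and let H₁, H₂ be selfadjoint elements of A with ‖Hᵢ‖ ≤ R and whose real spectra are contained in {x : |x| ≥ δ}. Then ‖ sgn(H₁) − sgn(H₂) ‖ ≤ (1/δ + R²/δ³) ‖H₁ − H₂‖, where sgn(Hᵢ) denotes the continuous functional calculus of Hᵢ applied to the sign function x ↦ x/|x| (which is continuous on the spectrum of Hᵢ). -/

import Mathlib

open Filter Finset

namespace SgnAux

noncomputable def al (n : ℕ) : ℝ := Nat.centralBinom n / 4 ^ n

lemma al_pos (n : ℕ) : 0 < al n :=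
  div_pos (by exact_mod_cast Nat.centralBinom_pos n) (by positivity)

lemma al_zero : al 0 = 1 := by simp [al, Nat.centralBinom]

lemma al_rec (n : ℕ) : 2 * ((n : ℝ) + 1) * al (n + 1) = (2 * n + 1) * al n := by
  have h : ((n : ℝ) + 1) * (Nat.centralBinom (n + 1) : ℝ)
      = 2 * (2 * n + 1) * (Nat.centralBinom n : ℝ) := by
    exact_mod_cast Nat.succ_mul_centralBinom_succ n
  have h4 : (0:ℝ) < 4 ^ n := by positivity
  unfold al
  rw [pow_succ]
  field_simp
  nlinarith [h, h4]

lemma al_succ_le (n : ℕ) : al (n + 1) ≤ al n := by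
  have h := al_rec n
  nlinarith [al_pos (n + 1), al_pos n]

lemma al_le_one (n : ℕ) : al n ≤ 1 := by
  induction n with
  | zero => simp [al_zero]
  | succ n ih => exact (al_succ_le n).trans ih


lemma summable_geom_abs {t : ℝ} (ht : |t| < 1) : Summable fun n : ℕ => |t| ^ n :=
  summable_geometric_of_lt_one (abs_nonneg t) ht

lemma summable_nat_mul_geom_abs {t : ℝ} (ht : |t| < 1) :
    Summable fun n : ℕ => (n : ℝ) * |t| ^ n := by
  have := summable_pow_mul_geometric_of_norm_lt_one (R := ℝ) 1
    (by rwa [Real.norm_eq_abs, abs_abs] : ‖|t|‖ < 1)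
  simpa using this

lemma summable_al_mul_pow {t : ℝ} (ht : |t| < 1) : Summable fun n => al n * t ^ n := by
  refine Summable.of_norm_bounded (summable_geom_abs ht) fun n => ?_
  rw [Real.norm_eq_abs, abs_mul, abs_pow, abs_of_pos (al_pos n)]
  calc al n * |t| ^ n ≤ 1 * |t| ^ n := by gcongr; exact al_le_one n
    _ = |t| ^ n := one_mul _

lemma summable_nat_mul_pow_pred {t : ℝ} (ht : |t| < 1) :
    Summable fun n : ℕ => (n : ℝ) * |t| ^ (n - 1) := by
  rw [← summable_nat_add_iff 1]
  have h1 : Summable fun n : ℕ => (n : ℝ) * |t| ^ n + |t| ^ n :=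
    (summable_nat_mul_geom_abs ht).add (summable_geom_abs ht)
  refine h1.congr fun n => ?_
  push_cast [Nat.add_sub_cancel]
  ring

lemma summable_al_deriv {t : ℝ} (ht : |t| < 1) :
    Summable fun n => al n * ((n : ℝ) * t ^ (n - 1)) := by
  refine Summable.of_norm_bounded (summable_nat_mul_pow_pred ht) fun n => ?_
  rw [Real.norm_eq_abs, abs_mul, abs_mul, abs_pow, abs_of_pos (al_pos n),
    Nat.abs_cast]
  calc al n * ((n : ℝ) * |t| ^ (n - 1)) ≤ 1 * ((n : ℝ) * |t| ^ (n - 1)) := by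
        gcongr; exact al_le_one n
    _ = (n : ℝ) * |t| ^ (n - 1) := one_mul _

noncomputable def F (t : ℝ) : ℝ := ∑' n, al n * t ^ n

noncomputable def DF (t : ℝ) : ℝ := ∑' n, al n * ((n : ℝ) * t ^ (n - 1))

lemma summable_B {t : ℝ} (ht : |t| < 1) :
    Summable fun n : ℕ => (2 * (n : ℝ) + 1) * al n * t ^ n := by
  refine Summable.of_norm_bounded
    (((summable_nat_mul_geom_abs ht).mul_left 2).add (summable_geom_abs ht)) fun n => ?_
  rw [Real.norm_eq_abs, abs_mul, abs_mul, abs_pow, abs_of_pos (al_pos n),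
    abs_of_nonneg (by positivity : (0:ℝ) ≤ 2 * (n:ℝ) + 1)]
  calc (2 * (n : ℝ) + 1) * al n * |t| ^ n ≤ (2 * (n : ℝ) + 1) * 1 * |t| ^ n := by
        gcongr; exact al_le_one n
    _ = 2 * ((n:ℝ) * |t| ^ n) + |t| ^ n := by ring

lemma summable_C {t : ℝ} (ht : |t| < 1) :
    Summable fun n : ℕ => 2 * (n : ℝ) * al n * t ^ n := by
  refine Summable.of_norm_bounded ((summable_nat_mul_geom_abs ht).mul_left 2) fun n => ?_
  rw [Real.norm_eq_abs, abs_mul, abs_mul, abs_pow, abs_of_pos (al_pos n),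
    abs_of_nonneg (by positivity : (0:ℝ) ≤ 2 * (n:ℝ))]
  calc 2 * (n : ℝ) * al n * |t| ^ n ≤ 2 * (n : ℝ) * 1 * |t| ^ n := by
        gcongr; exact al_le_one n
    _ = 2 * ((n:ℝ) * |t| ^ n) := by ring

lemma ode {t : ℝ} (ht : |t| < 1) : 2 * (1 - t) * DF t = F t := by
  have S2 := summable_al_deriv ht
  have hshift : DF t = ∑' n : ℕ, al (n + 1) * (((n : ℝ) + 1) * t ^ n) := by
    rw [DF, Summable.tsum_eq_zero_add S2]
    push_cast [Nat.add_sub_cancel]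
    simp
  have SB := summable_B ht
  have SC := summable_C ht
  have SCs : Summable fun n : ℕ => 2 * ((n : ℝ) + 1) * al (n + 1) * t ^ (n + 1) := by
    have := (summable_nat_add_iff (f := fun n : ℕ => 2 * (n : ℝ) * al n * t ^ n) 1).2 SC
    refine this.congr fun n => ?_
    push_cast
    ring
  have key : ∀ n : ℕ, 2 * (1 - t) * (al (n + 1) * (((n : ℝ) + 1) * t ^ n))
      = (2 * (n : ℝ) + 1) * al n * t ^ n - 2 * ((n : ℝ) + 1) * al (n + 1) * t ^ (n + 1) := by
    intro n
    linear_combination t ^ n * al_rec n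
  calc 2 * (1 - t) * DF t
      = ∑' n : ℕ, 2 * (1 - t) * (al (n + 1) * (((n : ℝ) + 1) * t ^ n)) := by
        rw [hshift, ← tsum_mul_left]
    _ = ∑' n : ℕ, ((2 * (n : ℝ) + 1) * al n * t ^ n
          - 2 * ((n : ℝ) + 1) * al (n + 1) * t ^ (n + 1)) := by
        exact tsum_congr key
    _ = (∑' n : ℕ, (2 * (n : ℝ) + 1) * al n * t ^ n)
          - ∑' n : ℕ, 2 * ((n : ℝ) + 1) * al (n + 1) * t ^ (n + 1) := Summable.tsum_sub SB SCs
    _ = (∑' n : ℕ, (2 * (n : ℝ) + 1) * al n * t ^ n)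
          - ∑' n : ℕ, 2 * (n : ℝ) * al n * t ^ n := by
        congr 1
        rw [Summable.tsum_eq_zero_add SC]
        push_cast
        simp
    _ = ∑' n : ℕ, ((2 * (n : ℝ) + 1) * al n * t ^ n - 2 * (n : ℝ) * al n * t ^ n) :=
        (Summable.tsum_sub SB SC).symm
    _ = F t := by
        rw [F]
        exact tsum_congr fun n => by ring

lemma F_zero : F 0 = 1 := by
  rw [F, tsum_eq_single 0 (fun n hn => by simp [zero_pow hn])]
  simp [al_zero]

lemma Fval {r : ℝ} (h0 : 0 ≤ r) (h1 : r < 1) : F r = (Real.sqrt (1 - r))⁻¹ := by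
  set r' : ℝ := (1 + r) / 2 with hr'def
  have hr'0 : 0 < r' := by rw [hr'def]; linarith
  have hr'1 : r' < 1 := by rw [hr'def]; linarith
  have hrr' : r < r' := by rw [hr'def]; linarith
  have habs : |r'| < 1 := by rwa [abs_of_pos hr'0]
  have hu : Summable fun n : ℕ => (n : ℝ) * r' ^ (n - 1) := by
    simpa [abs_of_pos hr'0] using summable_nat_mul_pow_pred habs
  have hmem : ∀ x ∈ Set.Icc (0:ℝ) r, x ∈ Set.Ioo (-r') r' := fun x hx =>
    ⟨by linarith [hx.1], lt_of_le_of_lt hx.2 hrr'⟩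
  have hF : ∀ t ∈ Set.Ioo (-r') r', HasDerivAt F (DF t) t := by
    intro t ht
    refine hasDerivAt_tsum_of_isPreconnected hu
      isOpen_Ioo (convex_Ioo _ _).isPreconnected
      (fun n y _ => (hasDerivAt_pow n y).const_mul (al n))
      (fun n y hy => ?_) (Set.mem_Ioo.2 ⟨by linarith, hr'0⟩)
      (summable_al_mul_pow (t := 0) (by simp)) ht
    have hyr : |y| ≤ r' := by
      rw [abs_le]; exact ⟨hy.1.le, hy.2.le⟩
    rw [Real.norm_eq_abs, abs_mul, abs_mul, abs_pow, abs_of_pos (al_pos n), Nat.abs_cast]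
    calc al n * ((n:ℝ) * |y| ^ (n-1)) ≤ 1 * ((n:ℝ) * r' ^ (n-1)) := by
          gcongr <;> first
            | exact al_le_one n
            | exact abs_nonneg y
            | exact hyr
      _ = (n:ℝ) * r' ^ (n-1) := one_mul _
  set G : ℝ → ℝ := fun t => Real.sqrt (1 - t) * F t with hGdef
  have hG : ∀ t ∈ Set.Ioo (-r') r', HasDerivAt G 0 t := by
    intro t ht
    have ht1 : t < 1 := lt_trans ht.2 hr'1
    have h1t : (0:ℝ) < 1 - t := by linarith
    have habs' : |t| < 1 := by
      rw [abs_lt]; exact ⟨by linarith [ht.1, hr'1], ht1⟩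
    have hsqrt0 : 0 < Real.sqrt (1 - t) := Real.sqrt_pos.2 h1t
    have hsub : HasDerivAt (fun t : ℝ => 1 - t) (-1) t := by
      simpa using (hasDerivAt_id t).const_sub 1
    have hsq : HasDerivAt (fun t : ℝ => Real.sqrt (1 - t))
        (1 / (2 * Real.sqrt (1 - t)) * (-1)) t :=
      (Real.hasDerivAt_sqrt h1t.ne').comp t hsub
    have hprod := hsq.mul (hF t ht)
    have hsq2 : Real.sqrt (1 - t) ^ 2 = 1 - t := Real.sq_sqrt h1t.le
    have hzero : 1 / (2 * Real.sqrt (1 - t)) * (-1) * F t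
        + Real.sqrt (1 - t) * DF t = 0 := by
      have hode := ode habs'
      have hne : Real.sqrt (1 - t) ≠ 0 := hsqrt0.ne'
      field_simp
      linear_combination 2 * DF t * hsq2 + hode
    have hfin := hprod
    rw [hzero] at hfin
    exact hfin
  have hcont : ContinuousOn G (Set.Icc 0 r) := fun x hx =>
    ((hG x (hmem x hx)).continuousAt).continuousWithinAt
  have hderiv : ∀ x ∈ Set.Ico (0:ℝ) r, HasDerivWithinAt G 0 (Set.Ici x) x := fun x hx =>
    (hG x (hmem x ⟨hx.1, hx.2.le⟩)).hasDerivWithinAt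
  have hGr : G r = G 0 :=
    constant_of_has_deriv_right_zero hcont hderiv r (Set.right_mem_Icc.2 h0)
  have hG0 : G 0 = 1 := by
    rw [hGdef]; simp [F_zero]
  have h1r : (0:ℝ) < 1 - r := by linarith
  have hne : Real.sqrt (1 - r) ≠ 0 := (Real.sqrt_pos.2 h1r).ne'
  have h2 : Real.sqrt (1 - r) * F r = 1 := by
    have h3 := hGr.trans hG0
    simp only [hGdef] at h3
    exact h3
  rw [inv_eq_one_div, eq_div_iff hne]
  linear_combination h2

lemma DFval {r : ℝ} (h0 : 0 ≤ r) (h1 : r < 1) :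
    DF r = (Real.sqrt (1 - r))⁻¹ / (2 * (1 - r)) := by
  have h1r : (0:ℝ) < 1 - r := by linarith
  have habs : |r| < 1 := by rw [abs_of_nonneg h0]; exact h1
  have := ode habs
  rw [Fval h0 h1] at this
  field_simp at this ⊢
  linarith [this]

lemma tail_nonneg {t : ℝ} (h0 : 0 ≤ t) (h1 : t < 1) (N : ℕ) :
    0 ≤ F t - ∑ n ∈ Finset.range N, al n * t ^ n := by
  have habs : |t| < 1 := by rwa [abs_of_nonneg h0]
  have hsum := summable_al_mul_pow habs
  have := (Summable.sum_add_tsum_nat_add (f := fun n => al n * t ^ n) N hsum).symm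
  have htail : 0 ≤ ∑' k : ℕ, al (k + N) * t ^ (k + N) :=
    tsum_nonneg fun k => mul_nonneg (al_pos _).le (pow_nonneg h0 _)
  rw [F]
  linarith [this, htail]

lemma tail_mono {t r : ℝ} (h0 : 0 ≤ t) (htr : t ≤ r) (h1 : r < 1) (N : ℕ) :
    F t - ∑ n ∈ Finset.range N, al n * t ^ n
      ≤ F r - ∑ n ∈ Finset.range N, al n * r ^ n := by
  have habs : |t| < 1 := by rw [abs_of_nonneg h0]; linarith
  have habsr : |r| < 1 := by rw [abs_of_nonneg (h0.trans htr)]; exact h1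
  have hsumt := summable_al_mul_pow habs
  have hsumr := summable_al_mul_pow habsr
  have ht := (Summable.sum_add_tsum_nat_add (f := fun n => al n * t ^ n) N hsumt).symm
  have hr := (Summable.sum_add_tsum_nat_add (f := fun n => al n * r ^ n) N hsumr).symm
  have hst : Summable fun k : ℕ => al (k + N) * t ^ (k + N) :=
    (summable_nat_add_iff (f := fun n => al n * t ^ n) N).2 hsumt
  have hsr : Summable fun k : ℕ => al (k + N) * r ^ (k + N) :=
    (summable_nat_add_iff (f := fun n => al n * r ^ n) N).2 hsumr
  have hmono : (∑' k : ℕ, al (k + N) * t ^ (k + N))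
      ≤ ∑' k : ℕ, al (k + N) * r ^ (k + N) := by
    refine Summable.tsum_le_tsum (fun k => ?_) hst hsr
    have := al_pos (k + N)
    gcongr
  simp only [F]
  linarith [ht, hr, hmono]


lemma pow_lip {A : Type*} [NormedRing A] [NormOneClass A] {r : ℝ} (hr : 0 ≤ r)
    {u v : A} (hu : ‖u‖ ≤ r) (hv : ‖v‖ ≤ r) (n : ℕ) :
    ‖u ^ n - v ^ n‖ ≤ (n : ℝ) * r ^ (n - 1) * ‖u - v‖ := by
  induction n with
  | zero => simp
  | succ n ih =>
    have hdecomp : u ^ (n + 1) - v ^ (n + 1) = u * (u ^ n - v ^ n) + (u - v) * v ^ n := by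
      rw [pow_succ', pow_succ']
      noncomm_ring
    have h1 : ‖u * (u ^ n - v ^ n)‖ ≤ r * ((n : ℝ) * r ^ (n - 1) * ‖u - v‖) := by
      calc ‖u * (u ^ n - v ^ n)‖ ≤ ‖u‖ * ‖u ^ n - v ^ n‖ := norm_mul_le _ _
        _ ≤ r * ((n : ℝ) * r ^ (n - 1) * ‖u - v‖) := by
            apply mul_le_mul hu ih (norm_nonneg _) hr
    have h2 : ‖(u - v) * v ^ n‖ ≤ r ^ n * ‖u - v‖ := by
      calc ‖(u - v) * v ^ n‖ ≤ ‖u - v‖ * ‖v ^ n‖ := norm_mul_le _ _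
        _ ≤ ‖u - v‖ * r ^ n := by
            refine mul_le_mul_of_nonneg_left ?_ (norm_nonneg _)
            exact (norm_pow_le v n).trans (pow_le_pow_left₀ (norm_nonneg v) hv n)
        _ = r ^ n * ‖u - v‖ := mul_comm _ _
    have hstep : r * ((n : ℝ) * r ^ (n - 1)) ≤ (n : ℝ) * r ^ n := by
      cases n with
      | zero => simp
      | succ m =>
        refine le_of_eq ?_
        rw [Nat.add_sub_cancel]
        push_cast
        ring
    calc ‖u ^ (n + 1) - v ^ (n + 1)‖
        ≤ ‖u * (u ^ n - v ^ n)‖ + ‖(u - v) * v ^ n‖ := by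
          rw [hdecomp]; exact norm_add_le _ _
      _ ≤ r * ((n : ℝ) * r ^ (n - 1) * ‖u - v‖) + r ^ n * ‖u - v‖ := add_le_add h1 h2
      _ ≤ ((n : ℝ) * r ^ n + r ^ n) * ‖u - v‖ := by
          have := mul_le_mul_of_nonneg_right hstep (norm_nonneg (u - v))
          ring_nf
          ring_nf at this ⊢
          nlinarith [norm_nonneg (u - v), this]
      _ = (↑(n + 1) : ℝ) * r ^ ((n + 1) - 1) * ‖u - v‖ := by
          rw [Nat.add_sub_cancel]
          push_cast
          ring

section KeyLemma

variable {A : Type*} [CStarAlgebra A] [Nontrivial A]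

set_option maxHeartbeats 1000000 in
lemma cfc_rsqrt_repr (δ c : ℝ) (hδ : 0 < δ) (hc : δ ^ 2 ≤ c)
    (a : A) (ha : IsSelfAdjoint a) (hsa : spectrum ℝ a ⊆ Set.Icc (δ ^ 2) c) :
    cfc (fun x : ℝ => (Real.sqrt x)⁻¹) a
      = (Real.sqrt c)⁻¹ • ∑' n, al n • ((1 : A) - c⁻¹ • a) ^ n := by
  have hc0 : 0 < c := lt_of_lt_of_le (by positivity) hc
  set r : ℝ := 1 - δ ^ 2 / c with hrdef
  have h0r : 0 ≤ r := by
    rw [hrdef, sub_nonneg]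
    exact (div_le_one hc0).2 hc
  have h1r : r < 1 := by
    rw [hrdef]
    have : 0 < δ ^ 2 / c := by positivity
    linarith
  have habsr : |r| < 1 := by rwa [abs_of_nonneg h0r]
  set u : A := (1 : A) - c⁻¹ • a with hudef
  have hcontg : ContinuousOn (fun x : ℝ => (Real.sqrt x)⁻¹) (spectrum ℝ a) := by
    refine ContinuousOn.inv₀ Real.continuous_sqrt.continuousOn fun x hx => ?_
    have := (hsa hx).1
    exact (Real.sqrt_pos.2 (by nlinarith)).ne'
  have hrange : ∀ x ∈ spectrum ℝ a, 0 ≤ 1 - c⁻¹ * x ∧ 1 - c⁻¹ * x ≤ r := by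
    intro x hx
    obtain ⟨hx1, hx2⟩ := hsa hx
    rw [inv_mul_eq_div, hrdef]
    constructor
    · rw [sub_nonneg]
      exact (div_le_one hc0).2 hx2
    · have : δ ^ 2 / c ≤ x / c := by gcongr
      linarith
  have hu_cfc : cfc (fun x : ℝ => 1 - c⁻¹ * x) a = u := by
    rw [show (fun x : ℝ => 1 - c⁻¹ * x) = fun x : ℝ => (fun _ : ℝ => (1:ℝ)) x - (fun y => c⁻¹ * y) x from rfl,
      cfc_sub _ _ a (by fun_prop) (by fun_prop), cfc_const 1 a, map_one,
      cfc_const_mul _ _ a (by fun_prop), cfc_id' ℝ a, hudef]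
  have hnorm_u : ‖u‖ ≤ r := by
    rw [← hu_cfc]
    refine norm_cfc_le h0r fun x hx => ?_
    obtain ⟨h1, h2⟩ := hrange x hx
    rw [Real.norm_eq_abs, abs_of_nonneg h1]
    exact h2
  have Su : Summable fun n => al n • u ^ n := by
    refine Summable.of_norm_bounded (summable_geom_abs habsr) fun n => ?_
    rw [norm_smul, Real.norm_eq_abs, abs_of_pos (al_pos n), abs_of_nonneg h0r]
    calc al n * ‖u ^ n‖ ≤ 1 * r ^ n := by
          refine mul_le_mul (al_le_one n) ?_ (norm_nonneg _) zero_le_one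
          exact (norm_pow_le u n).trans (pow_le_pow_left₀ (norm_nonneg u) hnorm_u n)
      _ = r ^ n := one_mul _
  -- partial sums as cfc
  have hP : ∀ N : ℕ,
      cfc (fun x : ℝ => (Real.sqrt c)⁻¹ * ∑ n ∈ Finset.range N, al n * (1 - c⁻¹ * x) ^ n) a
        = (Real.sqrt c)⁻¹ • ∑ n ∈ Finset.range N, al n • u ^ n := by
    intro N
    rw [cfc_const_mul _ _ a (by fun_prop)]
    congr 1
    have hfun : (fun x : ℝ => ∑ n ∈ Finset.range N, al n * (1 - c⁻¹ * x) ^ n)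
        = ∑ n ∈ Finset.range N, (fun x : ℝ => al n * (1 - c⁻¹ * x) ^ n) := by
      ext x; simp only [Finset.sum_apply]
    rw [hfun, cfc_sum _ a _ (fun i _ => by fun_prop)]
    refine Finset.sum_congr rfl fun n _ => ?_
    rw [show (fun x : ℝ => al n * (1 - c⁻¹ * x) ^ n)
        = fun x : ℝ => al n * ((fun y : ℝ => 1 - c⁻¹ * y) x) ^ n from rfl,
      cfc_const_mul _ _ a (by fun_prop), cfc_pow _ _ a (by fun_prop), hu_cfc]
  have hsqc : 0 ≤ (Real.sqrt c)⁻¹ := inv_nonneg.2 (Real.sqrt_nonneg c)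
  have hbound : ∀ N : ℕ,
      ‖cfc (fun x : ℝ => (Real.sqrt x)⁻¹) a
          - (Real.sqrt c)⁻¹ • ∑ n ∈ Finset.range N, al n • u ^ n‖
        ≤ (Real.sqrt c)⁻¹ * (F r - ∑ n ∈ Finset.range N, al n * r ^ n) := by
    intro N
    rw [← hP N, ← cfc_sub _ _ a hcontg (by fun_prop)]
    refine norm_cfc_le (mul_nonneg hsqc (tail_nonneg h0r h1r N)) fun x hx => ?_
    obtain ⟨ht0, htr⟩ := hrange x hx
    obtain ⟨hx1, hx2⟩ := hsa hx
    set t : ℝ := 1 - c⁻¹ * x with htdef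
    have hxval : x = c * (1 - t) := by
      rw [htdef]
      field_simp
      ring
    have hgx : (Real.sqrt x)⁻¹ = (Real.sqrt c)⁻¹ * F t := by
      rw [hxval, Real.sqrt_mul hc0.le, mul_inv, Fval ht0 (lt_of_le_of_lt htr h1r)]
    rw [Real.norm_eq_abs, hgx, ← mul_sub, abs_mul, abs_of_nonneg hsqc,
      abs_of_nonneg (tail_nonneg ht0 (lt_of_le_of_lt htr h1r) N)]
    exact mul_le_mul_of_nonneg_left (tail_mono ht0 htr h1r N) hsqc
  have hTend2 : Filter.Tendsto
      (fun N => (Real.sqrt c)⁻¹ * (F r - ∑ n ∈ Finset.range N, al n * r ^ n))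
      Filter.atTop (nhds 0) := by
    have hpart := (summable_al_mul_pow habsr).hasSum.tendsto_sum_nat
    have : Filter.Tendsto (fun N => F r - ∑ n ∈ Finset.range N, al n * r ^ n)
        Filter.atTop (nhds (F r - F r)) := Filter.Tendsto.sub tendsto_const_nhds hpart
    rw [sub_self] at this
    simpa using this.const_mul ((Real.sqrt c)⁻¹)
  have hTend1 : Filter.Tendsto
      (fun N => (Real.sqrt c)⁻¹ • ∑ n ∈ Finset.range N, al n • u ^ n)
      Filter.atTop (nhds ((Real.sqrt c)⁻¹ • ∑' n, al n • u ^ n)) :=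
    Su.hasSum.tendsto_sum_nat.const_smul _
  have hTend3 : Filter.Tendsto
      (fun N => (Real.sqrt c)⁻¹ • ∑ n ∈ Finset.range N, al n • u ^ n)
      Filter.atTop (nhds (cfc (fun x : ℝ => (Real.sqrt x)⁻¹) a)) := by
    rw [tendsto_iff_norm_sub_tendsto_zero]
    refine squeeze_zero (fun N => norm_nonneg _) (fun N => ?_) hTend2
    rw [norm_sub_rev]
    exact hbound N
  exact tendsto_nhds_unique hTend3 hTend1

set_option maxHeartbeats 1000000 in
lemma norm_cfc_rsqrt_sub_le (δ c : ℝ) (hδ : 0 < δ) (hc : δ ^ 2 ≤ c)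
    (a b : A) (ha : IsSelfAdjoint a) (hb : IsSelfAdjoint b)
    (hsa : spectrum ℝ a ⊆ Set.Icc (δ ^ 2) c) (hsb : spectrum ℝ b ⊆ Set.Icc (δ ^ 2) c) :
    ‖cfc (fun x : ℝ => (Real.sqrt x)⁻¹) a - cfc (fun x : ℝ => (Real.sqrt x)⁻¹) b‖
      ≤ ‖a - b‖ / (2 * δ ^ 3) := by
  have hc0 : 0 < c := lt_of_lt_of_le (by positivity) hc
  set r : ℝ := 1 - δ ^ 2 / c with hrdef
  have h0r : 0 ≤ r := by
    rw [hrdef, sub_nonneg]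
    exact (div_le_one hc0).2 hc
  have h1r : r < 1 := by
    rw [hrdef]
    have : 0 < δ ^ 2 / c := by positivity
    linarith
  have habsr : |r| < 1 := by rwa [abs_of_nonneg h0r]
  set u : A := (1 : A) - c⁻¹ • a with hudef
  set v : A := (1 : A) - c⁻¹ • b with hvdef
  -- norm bounds for u, v (reproved here)
  have hnorm : ∀ (w : A), IsSelfAdjoint w → spectrum ℝ w ⊆ Set.Icc (δ ^ 2) c →
      ‖(1 : A) - c⁻¹ • w‖ ≤ r := by
    intro w hw hsw
    have h_cfc : cfc (fun x : ℝ => 1 - c⁻¹ * x) w = (1 : A) - c⁻¹ • w := by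
      rw [show (fun x : ℝ => 1 - c⁻¹ * x) = fun x : ℝ => (fun _ : ℝ => (1:ℝ)) x - (fun y => c⁻¹ * y) x from rfl,
        cfc_sub _ _ w (by fun_prop) (by fun_prop), cfc_const 1 w, map_one,
        cfc_const_mul _ _ w (by fun_prop), cfc_id' ℝ w]
    rw [← h_cfc]
    refine norm_cfc_le h0r fun x hx => ?_
    obtain ⟨hx1, hx2⟩ := hsw hx
    have h1 : 0 ≤ 1 - c⁻¹ * x := by
      rw [inv_mul_eq_div, sub_nonneg]
      exact (div_le_one hc0).2 hx2
    rw [Real.norm_eq_abs, abs_of_nonneg h1, hrdef, inv_mul_eq_div]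
    have : δ ^ 2 / c ≤ x / c := by gcongr
    linarith
  have hnu : ‖u‖ ≤ r := hnorm a ha hsa
  have hnv : ‖v‖ ≤ r := hnorm b hb hsb
  have Su : Summable fun n => al n • u ^ n := by
    refine Summable.of_norm_bounded (summable_geom_abs habsr) fun n => ?_
    rw [norm_smul, Real.norm_eq_abs, abs_of_pos (al_pos n), abs_of_nonneg h0r]
    calc al n * ‖u ^ n‖ ≤ 1 * r ^ n := by
          refine mul_le_mul (al_le_one n) ?_ (norm_nonneg _) zero_le_one
          exact (norm_pow_le u n).trans (pow_le_pow_left₀ (norm_nonneg u) hnu n)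
      _ = r ^ n := one_mul _
  have Sv : Summable fun n => al n • v ^ n := by
    refine Summable.of_norm_bounded (summable_geom_abs habsr) fun n => ?_
    rw [norm_smul, Real.norm_eq_abs, abs_of_pos (al_pos n), abs_of_nonneg h0r]
    calc al n * ‖v ^ n‖ ≤ 1 * r ^ n := by
          refine mul_le_mul (al_le_one n) ?_ (norm_nonneg _) zero_le_one
          exact (norm_pow_le v n).trans (pow_le_pow_left₀ (norm_nonneg v) hnv n)
      _ = r ^ n := one_mul _
  have repra := cfc_rsqrt_repr δ c hδ hc a ha hsa
  have reprb := cfc_rsqrt_repr δ c hδ hc b hb hsb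
  rw [← hudef] at repra
  rw [← hvdef] at reprb
  -- difference of u,v
  have huv : u - v = c⁻¹ • (b - a) := by
    rw [hudef, hvdef, smul_sub]
    abel
  have hnuv : ‖u - v‖ = ‖a - b‖ / c := by
    rw [huv, norm_smul, Real.norm_eq_abs, abs_of_pos (inv_pos.2 hc0), norm_sub_rev,
      inv_mul_eq_div]
  -- term bound
  have hterm : ∀ n : ℕ, ‖al n • (u ^ n - v ^ n)‖
      ≤ al n * ((n : ℝ) * r ^ (n - 1)) * (‖a - b‖ / c) := by
    intro n
    rw [norm_smul, Real.norm_eq_abs, abs_of_pos (al_pos n), mul_assoc]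
    refine mul_le_mul_of_nonneg_left ?_ (al_pos n).le
    have := pow_lip h0r hnu hnv n
    rw [hnuv] at this
    exact this
  have Sbound : Summable fun n : ℕ => al n * ((n : ℝ) * r ^ (n - 1)) * (‖a - b‖ / c) :=
    (summable_al_deriv habsr).mul_right _
  have Snorm : Summable fun n : ℕ => ‖al n • (u ^ n - v ^ n)‖ :=
    Summable.of_nonneg_of_le (fun n => norm_nonneg _) hterm Sbound
  have Ssub : Summable fun n : ℕ => al n • (u ^ n - v ^ n) := by
    refine Summable.of_norm ?_
    exact Snorm
  have hdiff : cfc (fun x : ℝ => (Real.sqrt x)⁻¹) a - cfc (fun x : ℝ => (Real.sqrt x)⁻¹) b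
      = (Real.sqrt c)⁻¹ • ∑' n, al n • (u ^ n - v ^ n) := by
    rw [repra, reprb, ← smul_sub, ← Summable.tsum_sub Su Sv]
    congr 1
    exact tsum_congr fun n => (smul_sub (al n) _ _).symm
  have hsqc : 0 ≤ (Real.sqrt c)⁻¹ := inv_nonneg.2 (Real.sqrt_nonneg c)
  have hnormsum : ‖∑' n, al n • (u ^ n - v ^ n)‖ ≤ DF r * (‖a - b‖ / c) := by
    calc ‖∑' n, al n • (u ^ n - v ^ n)‖ ≤ ∑' n, ‖al n • (u ^ n - v ^ n)‖ :=
          norm_tsum_le_tsum_norm Snorm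
      _ ≤ ∑' n : ℕ, al n * ((n : ℝ) * r ^ (n - 1)) * (‖a - b‖ / c) :=
          Summable.tsum_le_tsum hterm Snorm Sbound
      _ = DF r * (‖a - b‖ / c) := by
          rw [DF, tsum_mul_right]
  have hfinal : (Real.sqrt c)⁻¹ * (DF r * (‖a - b‖ / c)) = ‖a - b‖ / (2 * δ ^ 3) := by
    have h1r' : 1 - r = δ ^ 2 / c := by rw [hrdef]; ring
    have hsq : Real.sqrt (1 - r) = δ / Real.sqrt c := by
      rw [h1r', Real.sqrt_div (by positivity) c, Real.sqrt_sq hδ.le]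
    have hsc : 0 < Real.sqrt c := Real.sqrt_pos.2 hc0
    have hsc2 : Real.sqrt c * Real.sqrt c = c := Real.mul_self_sqrt hc0.le
    rw [DFval h0r h1r, hsq, h1r']
    field_simp
  calc ‖cfc (fun x : ℝ => (Real.sqrt x)⁻¹) a - cfc (fun x : ℝ => (Real.sqrt x)⁻¹) b‖
      = (Real.sqrt c)⁻¹ * ‖∑' n, al n • (u ^ n - v ^ n)‖ := by
        rw [hdiff, norm_smul, Real.norm_eq_abs, abs_of_nonneg hsqc]
    _ ≤ (Real.sqrt c)⁻¹ * (DF r * (‖a - b‖ / c)) :=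
        mul_le_mul_of_nonneg_left hnormsum hsqc
    _ = ‖a - b‖ / (2 * δ ^ 3) := hfinal

end KeyLemma

end SgnAux
open SgnAux in
set_option maxHeartbeats 1000000 in
/-- Let `A` be a unital C*-algebra, `δ > 0`, `R ≥ 0`, and `H₁, H₂` selfadjoint elements
with `‖Hᵢ‖ ≤ R` whose real spectra are contained in `{x : |x| ≥ δ}`. Then
`‖sgn(H₁) − sgn(H₂)‖ ≤ (1/δ + R²/δ³) ‖H₁ − H₂‖`, where `sgn(Hᵢ)` is the continuous
functional calculus of `Hᵢ` applied to `x ↦ x/|x|`. -/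
theorem norm_sign_sub_sign_le {A : Type*} [CStarAlgebra A]
    (δ R : ℝ) (hδ : 0 < δ) (hR : 0 ≤ R)
    (H₁ H₂ : A) (h₁ : IsSelfAdjoint H₁) (h₂ : IsSelfAdjoint H₂)
    (hn₁ : ‖H₁‖ ≤ R) (hn₂ : ‖H₂‖ ≤ R)
    (hs₁ : spectrum ℝ H₁ ⊆ {x : ℝ | δ ≤ |x|}) (hs₂ : spectrum ℝ H₂ ⊆ {x : ℝ | δ ≤ |x|}) :
    ‖cfc (fun x : ℝ => x / |x|) H₁ - cfc (fun x : ℝ => x / |x|) H₂‖ ≤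
      (1 / δ + R ^ 2 / δ ^ 3) * ‖H₁ - H₂‖ := by
  rcases subsingleton_or_nontrivial A with hS | hN
  · have h0 : cfc (fun x : ℝ => x / |x|) H₁ - cfc (fun x : ℝ => x / |x|) H₂ = 0 :=
      Subsingleton.elim _ _
    rw [h0, norm_zero]
    positivity
  -- δ ≤ R
  obtain ⟨x₀, hx₀⟩ := h₁.spectrum_nonempty
  have hδR : δ ≤ R := by
    have h1 : δ ≤ |x₀| := hs₁ hx₀
    have h2 : ‖x₀‖ ≤ ‖H₁‖ := spectrum.norm_le_norm_of_mem hx₀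
    rw [Real.norm_eq_abs] at h2
    linarith
  have hδ2R2 : δ ^ 2 ≤ R ^ 2 := by nlinarith
  -- spectra of squares
  have hsq_spec : ∀ (H : A), IsSelfAdjoint H → ‖H‖ ≤ R →
      spectrum ℝ H ⊆ {x : ℝ | δ ≤ |x|} → spectrum ℝ (H ^ 2) ⊆ Set.Icc (δ ^ 2) (R ^ 2) := by
    intro H hH hnH hsH
    have : spectrum ℝ (H ^ 2) = (fun x : ℝ => x ^ 2) '' spectrum ℝ H := by
      conv_lhs => rw [← cfc_pow_id (R := ℝ) H 2]
      exact cfc_map_spectrum _ _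
    rw [this]
    rintro - ⟨x, hx, rfl⟩
    have h1 : δ ≤ |x| := hsH hx
    have h2 : |x| ≤ R := by
      have := spectrum.norm_le_norm_of_mem hx
      rw [Real.norm_eq_abs] at this
      linarith
    have hx2 : x ^ 2 = |x| ^ 2 := (sq_abs x).symm
    constructor
    · simp only; rw [hx2]; nlinarith
    · simp only; rw [hx2]; nlinarith
  have hspa := hsq_spec H₁ h₁ hn₁ hs₁
  have hspb := hsq_spec H₂ h₂ hn₂ hs₂
  have ha2 : IsSelfAdjoint (H₁ ^ 2) := h₁.pow 2
  have hb2 : IsSelfAdjoint (H₂ ^ 2) := h₂.pow 2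
  -- sign decomposition
  have hdecomp : ∀ (H : A), IsSelfAdjoint H → spectrum ℝ H ⊆ {x : ℝ | δ ≤ |x|} →
      cfc (fun x : ℝ => x / |x|) H = H * cfc (fun x : ℝ => (Real.sqrt x)⁻¹) (H ^ 2) := by
    intro H hH hsH
    have hne : ∀ x ∈ spectrum ℝ H, Real.sqrt (x ^ 2) ≠ 0 := by
      intro x hx
      have h1 : δ ≤ |x| := hsH hx
      have : 0 < x ^ 2 := by nlinarith [sq_abs x, h1, hδ]
      exact (Real.sqrt_pos.2 this).ne'
    have hcont1 : ContinuousOn (fun x : ℝ => (Real.sqrt (x ^ 2))⁻¹) (spectrum ℝ H) := by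
      refine ContinuousOn.inv₀ ?_ hne
      exact (Real.continuous_sqrt.comp (continuous_pow 2)).continuousOn
    have hcont2 : ContinuousOn (fun x : ℝ => (Real.sqrt x)⁻¹)
        ((fun x : ℝ => x ^ 2) '' spectrum ℝ H) := by
      refine ContinuousOn.inv₀ Real.continuous_sqrt.continuousOn ?_
      rintro - ⟨x, hx, rfl⟩
      exact hne x hx
    have step1 : cfc (fun x : ℝ => x / |x|) H
        = cfc (fun x : ℝ => x * (Real.sqrt (x ^ 2))⁻¹) H := by
      refine cfc_congr fun x hx => ?_
      rw [Real.sqrt_sq_eq_abs, div_eq_mul_inv]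
    have step2 : cfc (fun x : ℝ => x * (Real.sqrt (x ^ 2))⁻¹) H
        = H * cfc (fun x : ℝ => (Real.sqrt (x ^ 2))⁻¹) H := by
      rw [show (fun x : ℝ => x * (Real.sqrt (x ^ 2))⁻¹)
          = fun x : ℝ => (fun y : ℝ => y) x * (fun y : ℝ => (Real.sqrt (y ^ 2))⁻¹) x from rfl,
        cfc_mul _ _ H (by fun_prop) hcont1, cfc_id' ℝ H]
    have step3 : cfc (fun x : ℝ => (Real.sqrt (x ^ 2))⁻¹) H
        = cfc (fun x : ℝ => (Real.sqrt x)⁻¹) (H ^ 2) := by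
      have := cfc_comp' (fun x : ℝ => (Real.sqrt x)⁻¹) (fun x : ℝ => x ^ 2) H hcont2 (by fun_prop)
      rw [cfc_pow_id (R := ℝ) H 2] at this
      exact this
    rw [step1, step2, step3]
  -- norm of J₁
  have hJ1 : ‖cfc (fun x : ℝ => (Real.sqrt x)⁻¹) (H₁ ^ 2)‖ ≤ 1 / δ := by
    refine norm_cfc_le (by positivity) fun x hx => ?_
    obtain ⟨hx1, hx2⟩ := hspa hx
    have hδx : δ ≤ Real.sqrt x := by
      calc δ = Real.sqrt (δ ^ 2) := (Real.sqrt_sq hδ.le).symm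
        _ ≤ Real.sqrt x := Real.sqrt_le_sqrt hx1
    rw [Real.norm_eq_abs, abs_of_nonneg (inv_nonneg.2 (Real.sqrt_nonneg x)), one_div]
    exact inv_anti₀ hδ hδx
  -- key estimate
  have hkey := norm_cfc_rsqrt_sub_le δ (R ^ 2) hδ hδ2R2 (H₁ ^ 2) (H₂ ^ 2) ha2 hb2 hspa hspb
  -- norm of square difference
  have hsqdiff : ‖H₁ ^ 2 - H₂ ^ 2‖ ≤ 2 * R * ‖H₁ - H₂‖ := by
    have hid : H₁ ^ 2 - H₂ ^ 2 = H₁ * (H₁ - H₂) + (H₁ - H₂) * H₂ := by noncomm_ring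
    calc ‖H₁ ^ 2 - H₂ ^ 2‖ ≤ ‖H₁ * (H₁ - H₂)‖ + ‖(H₁ - H₂) * H₂‖ := by
          rw [hid]; exact norm_add_le _ _
      _ ≤ ‖H₁‖ * ‖H₁ - H₂‖ + ‖H₁ - H₂‖ * ‖H₂‖ := add_le_add (norm_mul_le _ _) (norm_mul_le _ _)
      _ ≤ R * ‖H₁ - H₂‖ + ‖H₁ - H₂‖ * R := by
          gcongr
      _ = 2 * R * ‖H₁ - H₂‖ := by ring
  set J₁ := cfc (fun x : ℝ => (Real.sqrt x)⁻¹) (H₁ ^ 2) with hJ₁def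
  set J₂ := cfc (fun x : ℝ => (Real.sqrt x)⁻¹) (H₂ ^ 2) with hJ₂def
  have hid2 : H₁ * J₁ - H₂ * J₂ = (H₁ - H₂) * J₁ + H₂ * (J₁ - J₂) := by noncomm_ring
  calc ‖cfc (fun x : ℝ => x / |x|) H₁ - cfc (fun x : ℝ => x / |x|) H₂‖
      = ‖(H₁ - H₂) * J₁ + H₂ * (J₁ - J₂)‖ := by
        rw [hdecomp H₁ h₁ hs₁, hdecomp H₂ h₂ hs₂, ← hJ₁def, ← hJ₂def, hid2]
    _ ≤ ‖(H₁ - H₂) * J₁‖ + ‖H₂ * (J₁ - J₂)‖ := norm_add_le _ _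
    _ ≤ ‖H₁ - H₂‖ * ‖J₁‖ + ‖H₂‖ * ‖J₁ - J₂‖ := add_le_add (norm_mul_le _ _) (norm_mul_le _ _)
    _ ≤ ‖H₁ - H₂‖ * (1 / δ) + R * (‖H₁ ^ 2 - H₂ ^ 2‖ / (2 * δ ^ 3)) := by
        gcongr <;> first
          | exact hJ1
          | exact hkey
    _ ≤ ‖H₁ - H₂‖ * (1 / δ) + R * ((2 * R * ‖H₁ - H₂‖) / (2 * δ ^ 3)) := by
        gcongr
    _ = (1 / δ + R ^ 2 / δ ^ 3) * ‖H₁ - H₂‖ := by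
        field_simp
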